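/- Integral identities for the explicit ground state: let λ > 0, y ∈ ℝ³ and Φ ∈ ℂ² with ‖Φ‖² = 3λ/8, and set u = √(3/2)·U_{λ,y} and ψ(x) = U_{λ,y}(x)³·(Φ − c((x − y)/λ)Φ). Then ∫_{ℝ³} ‖∇u(x)‖² dx = 9π²/4 and ∫_{ℝ³} u(x)²·‖ψ(x)‖² dx = 9π²/4; in particular ∫_{ℝ³} ‖∇u‖² dx = ∫_{ℝ³} u²‖ψ‖² dx, the Nehari-type identity satisfied by solutions of the Euclidean Dirac–Einstein system. -/

import Mathlib

open MeasureTheory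

noncomputable section

/-- Points of Euclidean `ℝ³`. -/
abbrev R3 := EuclideanSpace ℝ (Fin 3)

/-- Spinors: `ℂ²` with its standard Hermitian inner product and norm. -/
abbrev Spinor := EuclideanSpace ℂ (Fin 2)

/-- The standard bubble `U_{λ,y}(x) = (2λ/(λ² + ‖x − y‖²))^(1/2)`. -/
def bubble (l : ℝ) (y : R3) (x : R3) : ℝ :=
  Real.sqrt (2 * l / (l ^ 2 + ‖x - y‖ ^ 2))

/-- Pauli matrix `σ₁`. -/
def pauli1 : Matrix (Fin 2) (Fin 2) ℂ := !![0, 1; 1, 0]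

/-- Pauli matrix `σ₂`. -/
def pauli2 : Matrix (Fin 2) (Fin 2) ℂ := !![0, -Complex.I; Complex.I, 0]

/-- Pauli matrix `σ₃`. -/
def pauli3 : Matrix (Fin 2) (Fin 2) ℂ := !![1, 0; 0, -1]

/-- Clifford multiplication by `v ∈ ℝ³`: the matrix `c(v) = −i(v₁σ₁ + v₂σ₂ + v₃σ₃)`. -/
def cliffordMatrix (v : R3) : Matrix (Fin 2) (Fin 2) ℂ :=
  (-Complex.I) • ((v 0 : ℂ) • pauli1 + (v 1 : ℂ) • pauli2 + (v 2 : ℂ) • pauli3)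

/-- The action of `c(v)` on a spinor. -/
def cliffordMul (v : R3) (φ : Spinor) : Spinor :=
  (WithLp.equiv 2 (Fin 2 → ℂ)).symm ((cliffordMatrix v).mulVec (WithLp.equiv 2 (Fin 2 → ℂ) φ))

/-- The ground-state scalar `u = √(3/2)·U_{λ,y}`. -/
def groundScalar (l : ℝ) (y : R3) (x : R3) : ℝ :=
  Real.sqrt (3 / 2) * bubble l y x

/-- The ground-state spinor `ψ(x) = U_{λ,y}(x)³·(Φ − c((x − y)/λ)Φ)`. -/
def groundSpinor (l : ℝ) (y : R3) (Φ : Spinor) (x : R3) : Spinor :=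
  (bubble l y x ^ 3 : ℝ) • (Φ - cliffordMul (l⁻¹ • (x - y)) Φ)

open Filter Real Set

/-! ### Auxiliary lemmas -/

lemma spinor_norm_sq (v : R3) (Φ : Spinor) :
    ‖Φ - cliffordMul v Φ‖ ^ 2 = (1 + ‖v‖ ^ 2) * ‖Φ‖ ^ 2 := by
  have hΦ : ∀ w : Spinor, ‖w‖ ^ 2 = ‖w 0‖ ^ 2 + ‖w 1‖ ^ 2 := by
    intro w
    rw [EuclideanSpace.norm_eq, Real.sq_sqrt (by positivity)]
    simp [Fin.sum_univ_two]
  have hv : ‖v‖ ^ 2 = (v 0) ^ 2 + (v 1) ^ 2 + (v 2) ^ 2 := by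
    rw [EuclideanSpace.norm_eq, Real.sq_sqrt (by positivity)]
    simp [Fin.sum_univ_three, Real.norm_eq_abs, sq_abs]
  rw [hΦ, hΦ, hv]
  have h0 : (Φ - cliffordMul v Φ) 0 = Φ 0 - ((-Complex.I * (v 2)) * Φ 0 + (-Complex.I * (v 0) + -(v 1)) * Φ 1) := by
    simp [cliffordMul, cliffordMatrix, pauli1, pauli2, pauli3, Matrix.mulVec, dotProduct,
      Fin.sum_univ_two]
    ring_nf
    simp [Complex.I_sq]
    try ring
  have h1 : (Φ - cliffordMul v Φ) 1 = Φ 1 - ((-Complex.I * (v 0) + (v 1)) * Φ 0 + (Complex.I * (v 2)) * Φ 1) := by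
    simp [cliffordMul, cliffordMatrix, pauli1, pauli2, pauli3, Matrix.mulVec, dotProduct,
      Fin.sum_univ_two]
    ring_nf
    simp [Complex.I_sq]
    try ring
  rw [h0, h1]
  simp only [← Complex.normSq_eq_norm_sq]
  simp [Complex.normSq_apply, Complex.add_re, Complex.add_im, Complex.mul_re, Complex.mul_im,
    Complex.sub_re, Complex.sub_im, Complex.I_re, Complex.I_im, Complex.ofReal_re,
    Complex.ofReal_im, Complex.neg_re, Complex.neg_im]
  ring

lemma grad_norm_sq (l : ℝ) (hl : 0 < l) (y x : R3) :
    ‖gradient (groundScalar l y) x‖ ^ 2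
      = 3 * l * ‖x - y‖ ^ 2 / (l ^ 2 + ‖x - y‖ ^ 2) ^ 3 := by
  set s := ‖x - y‖ ^ 2 with hs
  have hden : (0:ℝ) < l ^ 2 + s := by positivity
  have hrad : (0:ℝ) < 2 * l / (l ^ 2 + s) := by positivity
  set c : ℝ := Real.sqrt (3 / 2) * ((0 * (l ^ 2 + s) - 2 * l * 1) / (l ^ 2 + s) ^ 2 /
      (2 * Real.sqrt (2 * l / (l ^ 2 + s)))) with hc
  have hq : HasFDerivAt (fun z : R3 => ‖z - y‖ ^ 2)
      (InnerProductSpace.toDual ℝ R3 ((2:ℝ) • (x - y))) x := by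
    have hid : HasFDerivAt (fun z : R3 => z - y) (ContinuousLinearMap.id ℝ R3) x :=
      (hasFDerivAt_id x).sub_const y
    have h := hid.inner ℝ hid
    have heq : (fun z : R3 => @inner ℝ _ _ (z - y) (z - y)) = fun z : R3 => ‖z - y‖ ^ 2 := by
      funext z; exact real_inner_self_eq_norm_sq _
    rw [heq] at h
    refine h.congr_fderiv ?_
    ext w
    simp only [InnerProductSpace.toDual_apply_apply, fderivInnerCLM_apply,
      ContinuousLinearMap.comp_apply, ContinuousLinearMap.prod_apply,
      ContinuousLinearMap.id_apply, real_inner_smul_left]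
    rw [real_inner_comm w (x - y)]
    ring
  have hφ : HasDerivAt (fun t : ℝ => Real.sqrt (3 / 2) * Real.sqrt (2 * l / (l ^ 2 + t)))
      c s := by
    have h1 : HasDerivAt (fun t : ℝ => 2 * l / (l ^ 2 + t))
        ((0 * (l ^ 2 + s) - 2 * l * 1) / (l ^ 2 + s) ^ 2) s :=
      (hasDerivAt_const s (2 * l)).div ((hasDerivAt_id s).const_add (l ^ 2)) hden.ne'
    exact (h1.sqrt hrad.ne').const_mul _
  have hgrad : HasGradientAt (groundScalar l y) ((c • ((2:ℝ) • (x - y)))) x := by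
    rw [hasGradientAt_iff_hasFDerivAt]
    have h := hφ.comp_hasFDerivAt x hq
    have heq2 : groundScalar l y = (fun t : ℝ => Real.sqrt (3 / 2) * Real.sqrt (2 * l / (l ^ 2 + t))) ∘
        (fun z : R3 => ‖z - y‖ ^ 2) := by
      funext z; simp [groundScalar, bubble, Function.comp]
    rw [heq2, _root_.map_smul]
    exact h
  have h32 : Real.sqrt (3 / 2) ^ 2 = 3 / 2 := Real.sq_sqrt (by norm_num)
  have hB : Real.sqrt (2 * l / (l ^ 2 + s)) ^ 2 = 2 * l / (l ^ 2 + s) := Real.sq_sqrt hrad.le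
  have hc2 : c ^ 2 = 3 * l / (4 * (l ^ 2 + s) ^ 3) := by
    have hB0 : Real.sqrt (2 * l / (l ^ 2 + s)) ≠ 0 := (Real.sqrt_pos.mpr hrad).ne'
    have key : ∀ A B : ℝ, B ≠ 0 →
        (A * ((0 * (l ^ 2 + s) - 2 * l * 1) / (l ^ 2 + s) ^ 2 / (2 * B))) ^ 2
          = A ^ 2 * ((2 * l) ^ 2 / ((l ^ 2 + s) ^ 2) ^ 2 / (2 ^ 2 * B ^ 2)) := by
      intro A B hB0
      field_simp
      ring
    rw [hc, key _ _ hB0, h32, hB]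
    field_simp
    ring
  have hn : ‖c • ((2:ℝ) • (x - y))‖ ^ 2 = c ^ 2 * (2 ^ 2 * s) := by
    rw [norm_smul, norm_smul, mul_pow, mul_pow, Real.norm_eq_abs, Real.norm_eq_abs,
      sq_abs, sq_abs, hs]
  rw [hgrad.gradient, hn, hc2]
  field_simp
  ring

lemma ground_prod_eq (l : ℝ) (hl : 0 < l) (y : R3) (Φ : Spinor)
    (hΦ : ‖Φ‖ ^ 2 = 3 * l / 8) (x : R3) :
    groundScalar l y x ^ 2 * ‖groundSpinor l y Φ x‖ ^ 2
      = 9 * l ^ 3 / (l ^ 2 + ‖x - y‖ ^ 2) ^ 3 := by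
  set s := ‖x - y‖ ^ 2 with hs
  have hden : (0:ℝ) < l ^ 2 + s := by positivity
  have hrad : (0:ℝ) ≤ 2 * l / (l ^ 2 + s) := by positivity
  have hU2 : bubble l y x ^ 2 = 2 * l / (l ^ 2 + s) := Real.sq_sqrt hrad
  have hUnn : 0 ≤ bubble l y x := Real.sqrt_nonneg _
  have h32 : Real.sqrt (3 / 2) ^ 2 = 3 / 2 := Real.sq_sqrt (by norm_num)
  have hz : ‖l⁻¹ • (x - y)‖ ^ 2 = l⁻¹ ^ 2 * s := by
    rw [norm_smul, mul_pow, Real.norm_eq_abs, sq_abs, hs]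
  have hspin : ‖groundSpinor l y Φ x‖ ^ 2
      = (bubble l y x ^ 2) ^ 3 * ((1 + l⁻¹ ^ 2 * s) * (3 * l / 8)) := by
    rw [groundSpinor, norm_smul, mul_pow, Real.norm_eq_abs, sq_abs,
      spinor_norm_sq, hz, hΦ]
    ring
  have hscal : groundScalar l y x ^ 2 = 3 / 2 * (2 * l / (l ^ 2 + s)) := by
    rw [groundScalar, mul_pow, h32, hU2]
  rw [hscal, hspin, hU2]
  field_simp
  ring

lemma vol_ball_R3 : (volume (Metric.ball (0 : R3) 1)).toReal = 4 * π / 3 := by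
  rw [EuclideanSpace.volume_ball]
  have hcard : Fintype.card (Fin 3) = 3 := by simp
  rw [hcard]
  have hΓ : Real.Gamma ((3 : ℕ) / 2 + 1) = 3 / 4 * Real.sqrt π := by
    have h1 : ((3:ℕ) : ℝ) / 2 + 1 = 3 / 2 + 1 := by norm_num
    rw [h1, Real.Gamma_add_one (by norm_num)]
    have h2 : (3:ℝ)/2 = 1/2 + 1 := by norm_num
    rw [h2, Real.Gamma_add_one (by norm_num), Real.Gamma_one_half_eq]
    ring
  rw [hΓ]
  have hs : Real.sqrt π ^ 3 / (3 / 4 * Real.sqrt π) = 4 * π / 3 := by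
    have hπ : Real.sqrt π ^ 2 = π := Real.sq_sqrt pi_pos.le
    have h3 : Real.sqrt π ^ 3 = π * Real.sqrt π := by rw [pow_succ, hπ]
    rw [h3, div_eq_iff (by positivity)]
    ring
  rw [hs]
  simp [ENNReal.toReal_ofReal (by positivity : (0:ℝ) ≤ 4 * π / 3)]

lemma radial_integral (y : R3) (f : ℝ → ℝ) :
    (∫ x : R3, f ‖x - y‖) = 4 * π * ∫ r in Ioi (0:ℝ), r ^ 2 * f r := by
  have h1 : (∫ x : R3, f ‖x - y‖) = ∫ x : R3, f ‖x‖ :=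
    integral_sub_right_eq_self (fun x : R3 => f ‖x‖) y
  rw [h1, integral_fun_norm_addHaar (volume : Measure R3) f]
  have hd : Module.finrank ℝ R3 = 3 := finrank_euclideanSpace_fin
  rw [hd, measureReal_def, vol_ball_R3]
  simp only [nsmul_eq_mul, smul_eq_mul]
  norm_num
  ring

lemma tendsto_arctan_div {l : ℝ} (hl : 0 < l) :
    Tendsto (fun r : ℝ => arctan (r / l)) atTop (nhds (π / 2)) :=
  (Real.tendsto_arctan_atTop.mono_right nhdsWithin_le_nhds).comp
    (Tendsto.atTop_div_const hl tendsto_id)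

lemma tendsto_r_div_sq {l : ℝ} (hl : 0 < l) :
    Tendsto (fun r : ℝ => r / (l ^ 2 + r ^ 2)) atTop (nhds 0) := by
  apply squeeze_zero' (g := fun r : ℝ => r⁻¹) ?_ ?_ tendsto_inv_atTop_zero
  · filter_upwards [eventually_ge_atTop (1:ℝ)] with r hr
    positivity
  · filter_upwards [eventually_ge_atTop (1:ℝ)] with r hr
    rw [inv_eq_one_div, div_le_div_iff₀ (by positivity) (by linarith)]
    nlinarith

lemma tendsto_r_div_quad {l : ℝ} (hl : 0 < l) :
    Tendsto (fun r : ℝ => r / (l ^ 2 + r ^ 2) ^ 2) atTop (nhds 0) := by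
  apply squeeze_zero' (g := fun r : ℝ => r⁻¹) ?_ ?_ tendsto_inv_atTop_zero
  · filter_upwards [eventually_ge_atTop (1:ℝ)] with r hr
    positivity
  · filter_upwards [eventually_ge_atTop (1:ℝ)] with r hr
    rw [inv_eq_one_div, div_le_div_iff₀ (by positivity) (by linarith)]
    nlinarith [sq_nonneg (r^2 - 1), sq_nonneg l, sq_nonneg (l*r), sq_nonneg (l^2+r^2-r)]

lemma hasDeriv_H1 {l : ℝ} (hl : 0 < l) (r : ℝ) :
    HasDerivAt (fun r : ℝ => 9/8 * arctan (r / l) - 15 * l / 8 * (r / (l ^ 2 + r ^ 2))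
        + 3 * l ^ 3 / 4 * (r / (l ^ 2 + r ^ 2) ^ 2))
      (r ^ 2 * (3 * l * r ^ 2 / (l ^ 2 + r ^ 2) ^ 3)) r := by
  have hden : (0:ℝ) < l ^ 2 + r ^ 2 := by positivity
  have h1 : HasDerivAt (fun r : ℝ => arctan (r / l)) (1 / (1 + (r / l) ^ 2) * (1 / l)) r :=
    ((hasDerivAt_id r).div_const l).arctan
  have hden' : HasDerivAt (fun r : ℝ => l ^ 2 + r ^ 2) (2 * r ^ (2-1) * 1) r :=
    ((hasDerivAt_id r).pow 2).const_add (l ^ 2)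
  have h2 : HasDerivAt (fun r : ℝ => r / (l ^ 2 + r ^ 2))
      ((1 * (l ^ 2 + r ^ 2) - r * (2 * r ^ (2-1) * 1)) / (l ^ 2 + r ^ 2) ^ 2) r :=
    (hasDerivAt_id r).div hden' hden.ne'
  have hden2 : HasDerivAt (fun r : ℝ => (l ^ 2 + r ^ 2) ^ 2)
      (2 * (l ^ 2 + r ^ 2) ^ (2-1) * (2 * r ^ (2-1) * 1)) r := hden'.pow 2
  have h3 : HasDerivAt (fun r : ℝ => r / (l ^ 2 + r ^ 2) ^ 2)
      ((1 * (l ^ 2 + r ^ 2) ^ 2 - r * (2 * (l ^ 2 + r ^ 2) ^ (2-1) * (2 * r ^ (2-1) * 1)))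
        / ((l ^ 2 + r ^ 2) ^ 2) ^ 2) r :=
    (hasDerivAt_id r).div hden2 (by positivity)
  have h := ((h1.const_mul (9/8 : ℝ)).sub (h2.const_mul (15 * l / 8))).add
    (h3.const_mul (3 * l ^ 3 / 4))
  refine h.congr_deriv ?_
  have hl2 : (1:ℝ) + (r / l) ^ 2 ≠ 0 := by positivity
  field_simp
  ring

lemma hasDeriv_H2 {l : ℝ} (hl : 0 < l) (r : ℝ) :
    HasDerivAt (fun r : ℝ => 9/8 * arctan (r / l) + 9 * l / 8 * (r / (l ^ 2 + r ^ 2))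
        - 9 * l ^ 3 / 4 * (r / (l ^ 2 + r ^ 2) ^ 2))
      (r ^ 2 * (9 * l ^ 3 / (l ^ 2 + r ^ 2) ^ 3)) r := by
  have hden : (0:ℝ) < l ^ 2 + r ^ 2 := by positivity
  have h1 : HasDerivAt (fun r : ℝ => arctan (r / l)) (1 / (1 + (r / l) ^ 2) * (1 / l)) r :=
    ((hasDerivAt_id r).div_const l).arctan
  have hden' : HasDerivAt (fun r : ℝ => l ^ 2 + r ^ 2) (2 * r ^ (2-1) * 1) r :=
    ((hasDerivAt_id r).pow 2).const_add (l ^ 2)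
  have h2 : HasDerivAt (fun r : ℝ => r / (l ^ 2 + r ^ 2))
      ((1 * (l ^ 2 + r ^ 2) - r * (2 * r ^ (2-1) * 1)) / (l ^ 2 + r ^ 2) ^ 2) r :=
    (hasDerivAt_id r).div hden' hden.ne'
  have hden2 : HasDerivAt (fun r : ℝ => (l ^ 2 + r ^ 2) ^ 2)
      (2 * (l ^ 2 + r ^ 2) ^ (2-1) * (2 * r ^ (2-1) * 1)) r := hden'.pow 2
  have h3 : HasDerivAt (fun r : ℝ => r / (l ^ 2 + r ^ 2) ^ 2)
      ((1 * (l ^ 2 + r ^ 2) ^ 2 - r * (2 * (l ^ 2 + r ^ 2) ^ (2-1) * (2 * r ^ (2-1) * 1)))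
        / ((l ^ 2 + r ^ 2) ^ 2) ^ 2) r :=
    (hasDerivAt_id r).div hden2 (by positivity)
  have h := ((h1.const_mul (9/8 : ℝ)).add (h2.const_mul (9 * l / 8))).sub
    (h3.const_mul (9 * l ^ 3 / 4))
  refine h.congr_deriv ?_
  have hl2 : (1:ℝ) + (r / l) ^ 2 ≠ 0 := by positivity
  field_simp
  ring

lemma int1 {l : ℝ} (hl : 0 < l) :
    ∫ r in Ioi (0:ℝ), r ^ 2 * (3 * l * r ^ 2 / (l ^ 2 + r ^ 2) ^ 3) = 9 * π / 16 := by
  have key := integral_Ioi_of_hasDerivAt_of_nonneg' (a := (0:ℝ))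
    (fun r _ => hasDeriv_H1 hl r)
    (fun r hr => by positivity)
    (l := 9 * π / 16) ?_
  · rw [key]; simp [Real.arctan_zero]
  · have := ((tendsto_arctan_div hl).const_mul (9/8 : ℝ)).sub
      ((tendsto_r_div_sq hl).const_mul (15 * l / 8)) |>.add
      ((tendsto_r_div_quad hl).const_mul (3 * l ^ 3 / 4))
    convert this using 2
    ring

lemma int2 {l : ℝ} (hl : 0 < l) :
    ∫ r in Ioi (0:ℝ), r ^ 2 * (9 * l ^ 3 / (l ^ 2 + r ^ 2) ^ 3) = 9 * π / 16 := by
  have key := integral_Ioi_of_hasDerivAt_of_nonneg' (a := (0:ℝ))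
    (fun r _ => hasDeriv_H2 hl r)
    (fun r hr => by positivity)
    (l := 9 * π / 16) ?_
  · rw [key]; simp [Real.arctan_zero]
  · have := ((tendsto_arctan_div hl).const_mul (9/8 : ℝ)).add
      ((tendsto_r_div_sq hl).const_mul (9 * l / 8)) |>.sub
      ((tendsto_r_div_quad hl).const_mul (9 * l ^ 3 / 4))
    convert this using 2
    ring

/-- Integral identities for the explicit ground state: with `‖Φ‖² = 3λ/8`,
`u = √(3/2)·U_{λ,y}` and `ψ(x) = U_{λ,y}(x)³·(Φ − c((x − y)/λ)Φ)`, one has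
`∫ ‖∇u‖² = 9π²/4` and `∫ u²‖ψ‖² = 9π²/4`; in particular `∫ ‖∇u‖² = ∫ u²‖ψ‖²`. -/
theorem groundstate_integral_identities (l : ℝ) (hl : 0 < l) (y : R3) (Φ : Spinor)
    (hΦ : ‖Φ‖ ^ 2 = 3 * l / 8) :
    (∫ x : R3, ‖gradient (groundScalar l y) x‖ ^ 2) = 9 * Real.pi ^ 2 / 4 ∧
      (∫ x : R3, groundScalar l y x ^ 2 * ‖groundSpinor l y Φ x‖ ^ 2)
        = 9 * Real.pi ^ 2 / 4 := by
  constructor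
  · have h1 : (∫ x : R3, ‖gradient (groundScalar l y) x‖ ^ 2)
        = ∫ x : R3, (fun r : ℝ => 3 * l * r ^ 2 / (l ^ 2 + r ^ 2) ^ 3) ‖x - y‖ := by
      congr 1
      funext x
      simp only
      rw [grad_norm_sq l hl y x]
    rw [h1, radial_integral y (fun r : ℝ => 3 * l * r ^ 2 / (l ^ 2 + r ^ 2) ^ 3), int1 hl]
    ring
  · have h1 : (∫ x : R3, groundScalar l y x ^ 2 * ‖groundSpinor l y Φ x‖ ^ 2)
        = ∫ x : R3, (fun r : ℝ => 9 * l ^ 3 / (l ^ 2 + r ^ 2) ^ 3) ‖x - y‖ := by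
      congr 1
      funext x
      simp only
      rw [ground_prod_eq l hl y Φ hΦ x]
    rw [h1, radial_integral y (fun r : ℝ => 9 * l ^ 3 / (l ^ 2 + r ^ 2) ^ 3), int2 hl]
    ring
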